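/- arXiv:1808.06512 — 3 statements merged into one kernel-verified Lean document; each statement's English description precedes it below -/
import Mathlib

section
/- Let G be a commutative group, and let K ≤ H be subgroups of G such that the index of K in H is a finite number n. Let A be an additive commutative group and let ψ : G/K → A be a finitely supported function that is invariant under left translation by H (i.e. ψ(h·xK) = ψ(xK) for all h ∈ H and x ∈ G). Then the sum of ψ over G/K is divisible by n: there exists a ∈ A with ∑_{x ∈ G/K} ψ(x) = n • a. In particular, if n • b = 0 for every b ∈ A, then ∑_{x ∈ G/K} ψ(x) = 0. -/
/-- Abstract form of Herzig's Lemma 2.7(iii): if `K ≤ H` are subgroups of a commutative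
group `G` with `[H : K] = n` finite, and `ψ : G/K → A` is a finitely supported function
invariant under left translation by `H`, then the sum of `ψ` over `G/K` is divisible
by `n`; in particular it vanishes if `A` has exponent dividing `n`. -/
theorem stmt0 {G : Type*} [CommGroup G] (K H : Subgroup G) (hKH : K ≤ H)
    (n : ℕ) (hn : K.relIndex H = n) (hn0 : n ≠ 0)
    {A : Type*} [AddCommGroup A] (ψ : G ⧸ K → A)
    (hsupp : (Function.support ψ).Finite)
    (hinv : ∀ h ∈ H, ∀ x : G ⧸ K, ψ (h • x) = ψ x) :
    (∃ a : A, ∑ᶠ x : G ⧸ K, ψ x = n • a) ∧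
      ((∀ b : A, n • b = 0) → ∑ᶠ x : G ⧸ K, ψ x = 0) := by
  classical
  set π : G ⧸ K → G ⧸ H := ⇑(QuotientGroup.map K H (MonoidHom.id G) (fun x hx => hKH hx)) with hπ
  have hπmk : ∀ a : G, π (a : G ⧸ K) = (a : G ⧸ H) := fun a => by rw [hπ]; rfl
  -- ψ is constant on fibers of π
  have key : ∀ a b : G, (a : G ⧸ H) = (b : G ⧸ H) → ψ (a : G ⧸ K) = ψ (b : G ⧸ K) := by
    intro a b hab
    have hmem : a⁻¹ * b ∈ H := QuotientGroup.eq.mp hab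
    have h2 := hinv (a⁻¹ * b) hmem (a : G ⧸ K)
    have h3 : (a⁻¹ * b) • ((a : G ⧸ K)) = ((b : G) : G ⧸ K) := by
      have : (a⁻¹ * b) • ((a : G ⧸ K)) = ((a⁻¹ * b * a : G) : G ⧸ K) := rfl
      rw [this]; congr 1; rw [mul_comm, mul_inv_cancel_left]
    rw [h3] at h2; exact h2.symm
  have key' : ∀ x y : G ⧸ K, π x = π y → ψ x = ψ y := by
    intro x y
    induction x using QuotientGroup.induction_on with | H a =>
    induction y using QuotientGroup.induction_on with | H b =>
    intro h; exact key a b (by rwa [hπmk, hπmk] at h)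
  -- each fiber of π has cardinality n
  have fibcard : ∀ y : G ⧸ H, Nat.card {x : G ⧸ K // π x = y} = n := by
    intro y
    induction y using QuotientGroup.induction_on with | H g =>
    have e : (H ⧸ K.subgroupOf H) ≃ {x : G ⧸ K // π x = (g : G ⧸ H)} := by
      refine Equiv.ofBijective (fun h => Quotient.liftOn' h
        (fun h => ⟨((g * h : G) : G ⧸ K), by rw [hπmk]; exact QuotientGroup.eq.mpr (by simpa [mul_inv_rev, mul_assoc] using H.inv_mem h.2)⟩)
        ?_) ⟨?_, ?_⟩
      · intro h1 h2 h12
        have : (h1 : G)⁻¹ * h2 ∈ K := by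
          have := QuotientGroup.leftRel_apply.mp h12
          simpa [Subgroup.mem_subgroupOf] using this
        exact Subtype.ext (QuotientGroup.eq.mpr (by simpa [mul_inv_rev, mul_assoc] using this))
      · intro h1 h2
        induction h1 using QuotientGroup.induction_on with | H a =>
        induction h2 using QuotientGroup.induction_on with | H b =>
        intro hab
        have : ((g * a : G) : G ⧸ K) = ((g * b : G) : G ⧸ K) := congrArg Subtype.val hab
        have hk : (g * a)⁻¹ * (g * b) ∈ K := QuotientGroup.eq.mp this
        refine QuotientGroup.eq.mpr ?_
        rw [Subgroup.mem_subgroupOf]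
        simpa [mul_assoc] using hk
      · rintro ⟨x, hx⟩
        induction x using QuotientGroup.induction_on with | H z =>
        rw [hπmk] at hx
        have hz : g⁻¹ * z ∈ H := QuotientGroup.eq.mp hx.symm
        refine ⟨((⟨g⁻¹ * z, hz⟩ : H) : H ⧸ K.subgroupOf H), ?_⟩
        apply Subtype.ext
        show ((g * (g⁻¹ * z) : G) : G ⧸ K) = (z : G ⧸ K)
        congr 1; group
    rw [← hn]
    exact (Nat.card_congr e.symm)
  -- factor ψ through π
  obtain ⟨φ, hφ⟩ : ∃ φ : G ⧸ H → A, ∀ x : G ⧸ K, ψ x = φ (π x) := by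
    refine ⟨fun y => Quotient.liftOn' y (fun g => ψ (g : G ⧸ K)) ?_, ?_⟩
    · intro a b hab
      exact key a b (QuotientGroup.eq.mpr (QuotientGroup.leftRel_apply.mp hab))
    · intro x
      induction x using QuotientGroup.induction_on with | H a =>
      rw [hπmk]; rfl
  set s : Finset (G ⧸ K) := hsupp.toFinset with hs
  set t : Finset (G ⧸ H) := s.image π with ht
  have hfin : ∀ y : G ⧸ H, ({x : G ⧸ K | π x = y}).Finite := by
    intro y
    rw [← Set.finite_coe_iff]
    have hc : Nat.card ↑{x : G ⧸ K | π x = y} = n := fibcard y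
    exact Nat.finite_of_card_ne_zero (by rw [hc]; exact hn0)
  have hfilter : ∀ y ∈ t, s.filter (fun x => π x = y) = (hfin y).toFinset := by
    intro y hy
    obtain ⟨x₀, hx₀s, hx₀⟩ := Finset.mem_image.mp hy
    ext x
    simp only [Finset.mem_filter, Set.Finite.mem_toFinset, Set.mem_setOf_eq, hs,
      Set.Finite.mem_toFinset, Function.mem_support]
    refine ⟨fun h => h.2, fun h => ⟨?_, h⟩⟩
    have : ψ x = ψ x₀ := key' x x₀ (h.trans hx₀.symm)
    rw [this]
    simpa [hs, Function.mem_support] using hx₀s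
  have hcard : ∀ y ∈ t, (s.filter (fun x => π x = y)).card = n := by
    intro y hy
    rw [hfilter y hy, ← Set.ncard_eq_toFinset_card _ (hfin y), ← Nat.card_coe_set_eq]
    exact fibcard y
  have hsum : ∑ᶠ x : G ⧸ K, ψ x = n • ∑ y ∈ t, φ y := by
    rw [finsum_eq_sum ψ hsupp, ← hs,
      ← Finset.sum_fiberwise_of_maps_to (fun x hx => Finset.mem_image_of_mem π hx) ψ, ← ht,
      Finset.smul_sum]
    refine Finset.sum_congr rfl fun y hy => ?_
    calc ∑ x ∈ s.filter (fun x => π x = y), ψ x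
        = ∑ x ∈ s.filter (fun x => π x = y), φ y := by
          refine Finset.sum_congr rfl fun x hx => ?_
          rw [hφ x, (Finset.mem_filter.mp hx).2]
      _ = n • φ y := by rw [Finset.sum_const, hcard y hy]
  exact ⟨⟨∑ y ∈ t, φ y, hsum⟩, fun hb => by rw [hsum]; exact hb _⟩
end

section
/- Let R be a commutative ring, G a group, and φ : G → Rˣ a group homomorphism; form the semidirect product P = R ⋊_φ G in which g ∈ G acts on the additive group (R, +) by multiplication by φ(g). If there exists g₀ ∈ G such that φ(g₀) − 1 is a unit of R, then the canonical copy of R inside P (the image of the inclusion r ↦ (r, 1)) is contained in the commutator subgroup of P. -/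
/-- Let `P = R ⋊ G` be the semidirect product of the additive group of a commutative ring
`R` by a group `G` acting through units via `φ : G →* Rˣ`. If some `φ g₀ - 1` is a unit
of `R`, then the canonical copy of `R` in `P` lies in the commutator subgroup of `P`. -/
theorem stmt6 {R : Type*} [CommRing R] {G : Type*} [Group G] (φ : G →* Rˣ)
    (ψ : G →* MulAut (Multiplicative R))
    (hψ : ∀ (g : G) (r : R),
      ψ g (Multiplicative.ofAdd r) = Multiplicative.ofAdd ((φ g : R) * r))
    (g₀ : G) (hunit : IsUnit ((φ g₀ : R) - 1)) :
    (SemidirectProduct.inl : Multiplicative R →* Multiplicative R ⋊[ψ] G).range ≤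
      commutator (Multiplicative R ⋊[ψ] G) := by
  rintro _ ⟨x, rfl⟩
  set u := hunit.unit with hu
  set s : Multiplicative R := Multiplicative.ofAdd ((↑u⁻¹ : R) * Multiplicative.toAdd x)
  open scoped commutatorElement in
  have key : (SemidirectProduct.inl x : Multiplicative R ⋊[ψ] G) =
      ⁅(SemidirectProduct.inr g₀ : Multiplicative R ⋊[ψ] G), SemidirectProduct.inl s⁆ := by
    rw [commutatorElement_def, ← map_inv, ← map_inv,
      ← SemidirectProduct.inl_aut (φ := ψ) g₀ s, ← map_mul]
    congr 1
    have : ψ g₀ s = Multiplicative.ofAdd ((φ g₀ : R) * ((↑u⁻¹ : R) * Multiplicative.toAdd x)) :=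
      hψ g₀ _
    rw [this]
    have hx : x = Multiplicative.ofAdd (Multiplicative.toAdd x) := rfl
    rw [hx]
    show Multiplicative.ofAdd _ = Multiplicative.ofAdd
      ((φ g₀ : R) * ((↑u⁻¹ : R) * Multiplicative.toAdd x) + -((↑u⁻¹ : R) * Multiplicative.toAdd x))
    congr 1
    have hu1 : (↑u : R) = (φ g₀ : R) - 1 := hunit.unit_spec
    have : ((φ g₀ : R) - 1) * ((↑u⁻¹ : R) * Multiplicative.toAdd x) = Multiplicative.toAdd x := by
      rw [← hu1, ← mul_assoc, Units.mul_inv, one_mul]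
    linear_combination -this
  rw [key]
  exact Subgroup.commutator_mem_commutator (Subgroup.mem_top _) (Subgroup.mem_top _)
end

section
/- Let p be a prime. Let Γ be the set of matrices g = (a b; c d) in GL₂(ℤ_p) whose lower-left entry c lies in p²ℤ_p. Then: (1) Γ is a subgroup of GL₂(ℤ_p); (2) for every g ∈ Γ the diagonal entries a and d are units of ℤ_p; and (3) the map λ : Γ → (ℤ/p²ℤ)ˣ sending g to the reduction modulo p² of a·d⁻¹ is a group homomorphism. -/
open Matrix

variable {R : Type*} [CommRing R]

/-- lower-triangular-zero subgroup of GL₂ -/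
def lowerZero (R : Type*) [CommRing R] : Subgroup (GL (Fin 2) R) where
  carrier := {g | (g : Matrix (Fin 2) (Fin 2) R) 1 0 = 0}
  one_mem' := by
    show ((1 : GL (Fin 2) R) : Matrix (Fin 2) (Fin 2) R) 1 0 = 0
    simp [Matrix.one_apply]
  mul_mem' := by
    intro a b ha hb
    show ((a * b : GL (Fin 2) R) : Matrix (Fin 2) (Fin 2) R) 1 0 = 0
    simp only [Units.val_mul, Matrix.mul_apply, Fin.sum_univ_two]
    simp only [Set.mem_setOf_eq] at ha hb
    rw [ha, hb]; ring
  inv_mem' := by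
    intro a ha
    show ((a⁻¹ : GL (Fin 2) R) : Matrix (Fin 2) (Fin 2) R) 1 0 = 0
    simp only [Set.mem_setOf_eq] at ha
    rw [Matrix.coe_units_inv, Matrix.inv_def, Matrix.adjugate_fin_two]
    simp [ha]

lemma lowerZero_a_isUnit (g : lowerZero R) :
    IsUnit (((g : GL (Fin 2) R) : Matrix (Fin 2) (Fin 2) R) 0 0) := by
  have hc : ((g : GL (Fin 2) R) : Matrix (Fin 2) (Fin 2) R) 1 0 = 0 := g.2
  have hdet : IsUnit ((g : GL (Fin 2) R) : Matrix (Fin 2) (Fin 2) R).det :=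
    (Matrix.isUnit_iff_isUnit_det _).mp (g : GL (Fin 2) R).isUnit
  rw [Matrix.det_fin_two, hc, mul_zero, sub_zero] at hdet
  exact isUnit_of_mul_isUnit_left hdet

lemma lowerZero_d_isUnit (g : lowerZero R) :
    IsUnit (((g : GL (Fin 2) R) : Matrix (Fin 2) (Fin 2) R) 1 1) := by
  have hc : ((g : GL (Fin 2) R) : Matrix (Fin 2) (Fin 2) R) 1 0 = 0 := g.2
  have hdet : IsUnit ((g : GL (Fin 2) R) : Matrix (Fin 2) (Fin 2) R).det :=
    (Matrix.isUnit_iff_isUnit_det _).mp (g : GL (Fin 2) R).isUnit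
  rw [Matrix.det_fin_two, hc, mul_zero, sub_zero] at hdet
  exact isUnit_of_mul_isUnit_right hdet

noncomputable def lamT : lowerZero R →* Rˣ where
  toFun g := (lowerZero_a_isUnit g).unit / (lowerZero_d_isUnit g).unit
  map_one' := by
    have h1 : (lowerZero_a_isUnit (1 : lowerZero R)).unit = 1 := by
      apply Units.ext
      simp [IsUnit.unit_spec, Matrix.one_apply]
    have h2 : (lowerZero_d_isUnit (1 : lowerZero R)).unit = 1 := by
      apply Units.ext
      simp [IsUnit.unit_spec, Matrix.one_apply]
    show (lowerZero_a_isUnit (1 : lowerZero R)).unit /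
      (lowerZero_d_isUnit (1 : lowerZero R)).unit = 1
    rw [h1]; simp
  map_mul' := by
    intro x y
    have hcy : ((y : GL (Fin 2) R) : Matrix (Fin 2) (Fin 2) R) 1 0 = 0 := y.2
    have hcx : ((x : GL (Fin 2) R) : Matrix (Fin 2) (Fin 2) R) 1 0 = 0 := x.2
    have hA : (lowerZero_a_isUnit (x * y)).unit =
        (lowerZero_a_isUnit x).unit * (lowerZero_a_isUnit y).unit := by
      apply Units.ext
      simp only [Units.val_mul, IsUnit.unit_spec, Subgroup.coe_mul, Matrix.mul_apply,
        Fin.sum_univ_two, hcy]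
      ring
    have hD : (lowerZero_d_isUnit (x * y)).unit =
        (lowerZero_d_isUnit x).unit * (lowerZero_d_isUnit y).unit := by
      apply Units.ext
      simp only [Units.val_mul, IsUnit.unit_spec, Subgroup.coe_mul, Matrix.mul_apply,
        Fin.sum_univ_two, hcy, hcx]
      ring
    show (lowerZero_a_isUnit (x * y)).unit / (lowerZero_d_isUnit (x * y)).unit =
      (lowerZero_a_isUnit x).unit / (lowerZero_d_isUnit x).unit *
        ((lowerZero_a_isUnit y).unit / (lowerZero_d_isUnit y).unit)
    rw [hA, hD, div_mul_div_comm]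

/-- For a prime `p`: the set of matrices in `GL₂(ℤ_p)` whose lower-left entry lies in
`p²ℤ_p` is a subgroup `Γ`; the diagonal entries of any element of `Γ` are units; and
`g ↦ (a·d⁻¹ mod p²)` defines a group homomorphism `Γ →* (ℤ/p²ℤ)ˣ`. -/
theorem stmt8 (p : ℕ) [Fact p.Prime] :
    ∃ Γ : Subgroup (GL (Fin 2) ℤ_[p]),
      (∀ g : GL (Fin 2) ℤ_[p],
          g ∈ Γ ↔ (g : Matrix (Fin 2) (Fin 2) ℤ_[p]) 1 0 ∈
            Ideal.span {(p : ℤ_[p]) ^ 2}) ∧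
      (∀ g ∈ Γ, IsUnit ((g : Matrix (Fin 2) (Fin 2) ℤ_[p]) 0 0) ∧
          IsUnit ((g : Matrix (Fin 2) (Fin 2) ℤ_[p]) 1 1)) ∧
      ∃ lam : Γ →* (ZMod (p ^ 2))ˣ,
        ∀ (g : Γ) (e : ℤ_[p]),
          ((g : GL (Fin 2) ℤ_[p]) : Matrix (Fin 2) (Fin 2) ℤ_[p]) 1 1 * e = 1 →
          (lam g : ZMod (p ^ 2)) =
            PadicInt.toZModPow 2
              (((g : GL (Fin 2) ℤ_[p]) : Matrix (Fin 2) (Fin 2) ℤ_[p]) 0 0 * e) := by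
  set φ := (PadicInt.toZModPow (p := p) 2)
  set f := Matrix.GeneralLinearGroup.map (n := Fin 2) φ
  refine ⟨Subgroup.comap f (lowerZero (ZMod (p ^ 2))), ?_, ?_, ?_⟩
  · intro g
    have hent : ((f g : GL (Fin 2) (ZMod (p ^ 2))) : Matrix (Fin 2) (Fin 2) (ZMod (p ^ 2))) 1 0 =
        φ ((g : Matrix (Fin 2) (Fin 2) ℤ_[p]) 1 0) := rfl
    rw [Subgroup.mem_comap]
    show ((f g : GL (Fin 2) (ZMod (p ^ 2))) : Matrix (Fin 2) (Fin 2) (ZMod (p ^ 2))) 1 0 = 0 ↔ _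
    rw [hent, ← RingHom.mem_ker, PadicInt.ker_toZModPow]
  · intro g hg
    have hc : (g : Matrix (Fin 2) (Fin 2) ℤ_[p]) 1 0 ∈ Ideal.span {(p : ℤ_[p]) ^ 2} := by
      have hent : ((f g : GL (Fin 2) (ZMod (p ^ 2))) : Matrix (Fin 2) (Fin 2) (ZMod (p ^ 2))) 1 0 =
          φ ((g : Matrix (Fin 2) (Fin 2) ℤ_[p]) 1 0) := rfl
      rw [Subgroup.mem_comap] at hg
      have := hg
      rw [← PadicInt.ker_toZModPow, RingHom.mem_ker, ← hent]
      exact this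
    have hdet : IsUnit (g : Matrix (Fin 2) (Fin 2) ℤ_[p]).det :=
      (Matrix.isUnit_iff_isUnit_det _).mp g.isUnit
    have hbc : (g : Matrix (Fin 2) (Fin 2) ℤ_[p]) 0 1 * (g : Matrix (Fin 2) (Fin 2) ℤ_[p]) 1 0 ∈
        IsLocalRing.maximalIdeal ℤ_[p] := by
      rw [PadicInt.maximalIdeal_eq_span_p]
      rw [Ideal.mem_span_singleton] at hc ⊢
      exact Dvd.dvd.mul_left (dvd_trans (dvd_pow_self _ two_ne_zero) hc) _
    have had : IsUnit ((g : Matrix (Fin 2) (Fin 2) ℤ_[p]) 0 0 *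
        (g : Matrix (Fin 2) (Fin 2) ℤ_[p]) 1 1) := by
      by_contra h
      have h1 : (g : Matrix (Fin 2) (Fin 2) ℤ_[p]) 0 0 * (g : Matrix (Fin 2) (Fin 2) ℤ_[p]) 1 1 ∈
          IsLocalRing.maximalIdeal ℤ_[p] := h
      have h2 : (g : Matrix (Fin 2) (Fin 2) ℤ_[p]).det ∈ IsLocalRing.maximalIdeal ℤ_[p] := by
        rw [Matrix.det_fin_two]
        exact Ideal.sub_mem _ h1 hbc
      exact (IsLocalRing.mem_maximalIdeal _).mp h2 hdet
    exact ⟨isUnit_of_mul_isUnit_left had, isUnit_of_mul_isUnit_right had⟩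
  · refine ⟨lamT.comp (MonoidHom.subgroupComap f (lowerZero (ZMod (p ^ 2)))), ?_⟩
    intro g e hde
    set x : lowerZero (ZMod (p ^ 2)) := MonoidHom.subgroupComap f (lowerZero (ZMod (p ^ 2))) g
    have hx : ((x : GL (Fin 2) (ZMod (p ^ 2))) : Matrix (Fin 2) (Fin 2) (ZMod (p ^ 2))) =
        fun i j => φ (((g : GL (Fin 2) ℤ_[p]) : Matrix (Fin 2) (Fin 2) ℤ_[p]) i j) := rfl
    have hAval : ((lowerZero_a_isUnit x).unit : ZMod (p ^ 2)) =
        φ (((g : GL (Fin 2) ℤ_[p]) : Matrix (Fin 2) (Fin 2) ℤ_[p]) 0 0) := by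
      rw [IsUnit.unit_spec, hx]
    have hDval : ((lowerZero_d_isUnit x).unit : ZMod (p ^ 2)) =
        φ (((g : GL (Fin 2) ℤ_[p]) : Matrix (Fin 2) (Fin 2) ℤ_[p]) 1 1) := by
      rw [IsUnit.unit_spec, hx]
    have hinv : (((lowerZero_d_isUnit x).unit⁻¹ : (ZMod (p ^ 2))ˣ) : ZMod (p ^ 2)) = φ e := by
      apply Units.inv_eq_of_mul_eq_one_right
      rw [hDval, ← _root_.map_mul, hde, _root_.map_one]
    show (((lowerZero_a_isUnit x).unit / (lowerZero_d_isUnit x).unit : (ZMod (p ^ 2))ˣ) :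
        ZMod (p ^ 2)) = _
    rw [div_eq_mul_inv, Units.val_mul, hAval, hinv, ← _root_.map_mul]
end
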